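/- If ρ > σ₁/σ₂, then P(λ₂^{opt}(n) < 0) → 1 as n → ∞; that is, the cross-validated weight on the second sample is eventually negative with probability tending to one. -/

import Mathlib

open MeasureTheory ProbabilityTheory Filter

/-- Leave-one-out mean from the first `n` observations, deleting the `j`-th one. -/
noncomputable def looM {Ω : Type*} (Y : ℕ → Ω → ℝ) (n j : ℕ) (ω : Ω) : ℝ :=
  (1 / ((n : ℝ) - 1)) * ∑ k ∈ (Finset.range n).erase j, Y k ω

/-- `S₁ᵉ = (1/n) ∑ⱼ (X̄₁^{(−j)} − X̄₂^{(−j)})²`. -/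
noncomputable def S1e {Ω : Type*} (Y1 Y2 : ℕ → Ω → ℝ) (n : ℕ) (ω : Ω) : ℝ :=
  (1 / (n : ℝ)) * ∑ j ∈ Finset.range n, (looM Y1 n j ω - looM Y2 n j ω) ^ 2

/-- `S₂ᵉ = (1/n) ∑ⱼ (X̄₁^{(−j)} − X̄₂^{(−j)})(X̄₁^{(−j)} − X_{1j})`. -/
noncomputable def S2e {Ω : Type*} (Y1 Y2 : ℕ → Ω → ℝ) (n : ℕ) (ω : Ω) : ℝ :=
  (1 / (n : ℝ)) * ∑ j ∈ Finset.range n,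
    (looM Y1 n j ω - looM Y2 n j ω) * (looM Y1 n j ω - Y1 j ω)

/-- The cross-validated weight `λ₂^{opt}(n) = S₂ᵉ/S₁ᵉ` (junk value when `S₁ᵉ = 0`). -/
noncomputable def lam2opt {Ω : Type*} (Y1 Y2 : ℕ → Ω → ℝ) (n : ℕ) (ω : Ω) : ℝ :=
  S2e Y1 Y2 n ω / S1e Y1 Y2 n ω

/-- Algebraic identity: `S₂ᵉ` equals a positive factor times an empirical covariance. -/
lemma S2e_eq {Ω : Type*} (Y1 Y2 : ℕ → Ω → ℝ) {n : ℕ} (hn : 2 ≤ n) (ω : Ω) :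
    S2e Y1 Y2 n ω = ((n : ℝ) / ((n : ℝ) - 1) ^ 2) *
      ((∑ j ∈ Finset.range n, (Y1 j ω) ^ 2) / n
        - (∑ j ∈ Finset.range n, Y1 j ω * Y2 j ω) / n
        - ((∑ j ∈ Finset.range n, Y1 j ω) / n - (∑ j ∈ Finset.range n, Y2 j ω) / n)
            * ((∑ j ∈ Finset.range n, Y1 j ω) / n)) := by
  have h2 : (2 : ℝ) ≤ (n : ℝ) := by exact_mod_cast hn
  have hn1 : ((n : ℝ) - 1) ≠ 0 := by linarith
  have hn0 : (n : ℝ) ≠ 0 := by linarith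
  set c : ℝ := 1 / ((n : ℝ) - 1) with hc
  set A := ∑ j ∈ Finset.range n, Y1 j ω with hA
  set B := ∑ j ∈ Finset.range n, Y2 j ω with hB
  set P := ∑ j ∈ Finset.range n, (Y1 j ω) ^ 2 with hP
  set Q := ∑ j ∈ Finset.range n, Y1 j ω * Y2 j ω with hQ
  have key : ∀ j ∈ Finset.range n,
      (looM Y1 n j ω - looM Y2 n j ω) * (looM Y1 n j ω - Y1 j ω)
        = c ^ 2 * (A * (A - B))
          + (-(2:ℝ) * c ^ 2 * A - c * A + c ^ 2 * B + c * B) * Y1 j ω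
          + (c ^ 2 * A) * Y2 j ω
          + (c ^ 2 + c) * (Y1 j ω) ^ 2
          - (c ^ 2 + c) * (Y1 j ω * Y2 j ω) := by
    intro j hj
    simp only [looM, Finset.sum_erase_eq_sub hj, ← hA, ← hB, hc]
    field_simp
    ring
  rw [S2e, Finset.sum_congr rfl key]
  simp only [Finset.sum_add_distrib, Finset.sum_sub_distrib, ← Finset.mul_sum,
    Finset.sum_const, Finset.card_range, nsmul_eq_mul, ← hA, ← hB, ← hP, ← hQ, hc]
  field_simp
  ring

/-- If `S₂ᵉ < 0`, then `S₁ᵉ > 0` and hence `λ₂^{opt} < 0`. -/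
lemma lam2opt_neg {Ω : Type*} (Y1 Y2 : ℕ → Ω → ℝ) (n : ℕ) (ω : Ω)
    (h : S2e Y1 Y2 n ω < 0) : lam2opt Y1 Y2 n ω < 0 := by
  have hnn : 0 ≤ S1e Y1 Y2 n ω :=
    mul_nonneg (one_div_nonneg.2 n.cast_nonneg)
      (Finset.sum_nonneg fun j _ => sq_nonneg _)
  rcases hnn.lt_or_eq with hpos | heq
  · exact div_neg_of_neg_of_pos h hpos
  · exfalso
    have hsum : ∑ j ∈ Finset.range n, (looM Y1 n j ω - looM Y2 n j ω) ^ 2 = 0 := by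
      rcases Nat.eq_zero_or_pos n with hn | hn
      · simp [hn]
      · have hne : (1 / (n : ℝ)) ≠ 0 := by
          have : (0 : ℝ) < n := by exact_mod_cast hn
          positivity
        rcases mul_eq_zero.1 heq.symm with h0 | h0
        · exact absurd h0 hne
        · exact h0
    have hz : ∀ j ∈ Finset.range n, looM Y1 n j ω - looM Y2 n j ω = 0 := by
      intro j hj
      have := (Finset.sum_eq_zero_iff_of_nonneg (fun i _ => sq_nonneg _)).1 hsum j hj
      exact pow_eq_zero_iff (by norm_num : (2:ℕ) ≠ 0) |>.1 this
    have hS2 : S2e Y1 Y2 n ω = 0 := by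
      rw [S2e, Finset.sum_congr rfl (fun j hj => by rw [hz j hj, zero_mul]),
        Finset.sum_const, smul_zero, mul_zero]
    exact absurd (hS2 ▸ h) (lt_irrefl 0)

/-- If a.s. eventually in `Aₙ`, then `μ(Aₙ) → 1`. -/
lemma meas_tendsto_one {Ω : Type*} [MeasurableSpace Ω] {μ : Measure Ω}
    [IsProbabilityMeasure μ] {A : ℕ → Set Ω}
    (h : ∀ᵐ ω ∂μ, ∀ᶠ n in atTop, ω ∈ A n) :
    Tendsto (fun n => μ (A n)) atTop (nhds 1) := by
  set B : ℕ → Set Ω := fun n => ⋂ m, ⋂ (_ : n ≤ m), A m with hB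
  have hmono : Monotone B := by
    intro i j hij
    exact Set.iInter₂_mono' fun m hm => ⟨m, hij.trans hm, le_rfl⟩
  have hU : Tendsto (fun n => μ (B n)) atTop (nhds (μ (⋃ n, B n))) :=
    tendsto_measure_iUnion_atTop hmono
  have hfull : μ (⋃ n, B n) = 1 := by
    have hsub : ∀ᵐ ω ∂μ, ω ∈ ⋃ n, B n := by
      filter_upwards [h] with ω hω
      rw [eventually_atTop] at hω
      obtain ⟨N, hN⟩ := hω
      exact Set.mem_iUnion.2 ⟨N, Set.mem_iInter₂.2 fun m hm => hN m hm⟩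
    have h0 : μ (⋃ n, B n)ᶜ = 0 := by
      simpa [ae_iff, Set.compl_def] using hsub
    have := measure_union_le (μ := μ) (⋃ n, B n) (⋃ n, B n)ᶜ
    rw [Set.union_compl_self, h0, add_zero, measure_univ] at this
    exact le_antisymm prob_le_one this
  rw [hfull] at hU
  refine tendsto_of_tendsto_of_tendsto_of_le_of_le hU tendsto_const_nhds
    (fun n => measure_mono ?_) (fun n => prob_le_one)
  exact Set.iInter₂_subset n le_rfl

/-- SLLN for a measurable function of i.i.d. random vectors. -/
lemma slln_comp {Ω : Type*} [MeasurableSpace Ω] (μ : Measure Ω) [IsProbabilityMeasure μ]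
    (X : ℕ → Ω → ℝ × ℝ)
    (hindep : iIndepFun X μ)
    (hident : ∀ j, IdentDistrib (X j) (X 0) μ μ)
    (f : ℝ × ℝ → ℝ) (hf : Measurable f)
    (hint : Integrable (fun ω => f (X 0 ω)) μ) :
    ∀ᵐ ω ∂μ, Tendsto (fun n => (∑ i ∈ Finset.range n, f (X i ω)) / n) atTop
      (nhds (∫ ω, f (X 0 ω) ∂μ)) :=
  strong_law_ae_real (fun i ω => f (X i ω)) hint
    (fun _ _ hij => (hindep.indepFun hij).comp hf hf)
    (fun i => (hident i).comp hf)

/-- If `ρ > σ₁/σ₂`, then `P(λ₂^{opt}(n) < 0) → 1` as `n → ∞`. -/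
theorem stmt_9 {Ω : Type*} [MeasurableSpace Ω] (μ : Measure Ω) [IsProbabilityMeasure μ]
    (X : ℕ → Ω → ℝ × ℝ) (hmeas : ∀ j, Measurable (X j))
    (hindep : iIndepFun X μ)
    (hident : ∀ j, IdentDistrib (X j) (X 0) μ μ)
    (hL2a : MemLp (fun ω => (X 0 ω).1) 2 μ)
    (hL2b : MemLp (fun ω => (X 0 ω).2) 2 μ)
    (θ1 θ2 σ1 σ2 ρ : ℝ)
    (hθ1 : θ1 = ∫ ω, (X 0 ω).1 ∂μ) (hθ2 : θ2 = ∫ ω, (X 0 ω).2 ∂μ)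
    (hσ1 : σ1 ^ 2 = variance (fun ω => (X 0 ω).1) μ)
    (hσ2 : σ2 ^ 2 = variance (fun ω => (X 0 ω).2) μ)
    (hσ1pos : 0 < σ1) (hσ2pos : 0 < σ2)
    (hρ : ρ * (σ1 * σ2) = ∫ ω, ((X 0 ω).1 - θ1) * ((X 0 ω).2 - θ2) ∂μ)
    (hcond : σ1 / σ2 < ρ) :
    Tendsto
      (fun n => μ {ω | lam2opt (fun j ω => (X j ω).1) (fun j ω => (X j ω).2) n ω < 0})
      atTop (nhds 1) := by
  -- integrability facts
  have ha : Integrable (fun ω => (X 0 ω).1) μ := hL2a.integrable one_le_two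
  have hb : Integrable (fun ω => (X 0 ω).2) μ := hL2b.integrable one_le_two
  have hab : Integrable (fun ω => (X 0 ω).1 * (X 0 ω).2) μ :=
    memLp_one_iff_integrable.1 (hL2b.smul hL2a (r := 1) (hpqr := ⟨by norm_num [ENNReal.inv_two_add_inv_two]⟩))
  have haa : Integrable (fun ω => (X 0 ω).1 ^ 2) μ := by
    have : Integrable (fun ω => (X 0 ω).1 * (X 0 ω).1) μ :=
      memLp_one_iff_integrable.1 (hL2a.smul hL2a (r := 1) (hpqr := ⟨by norm_num [ENNReal.inv_two_add_inv_two]⟩))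
    simpa [sq] using this
  -- expectations
  set Ep := ∫ ω, (X 0 ω).1 ^ 2 ∂μ with hEp
  set Eq := ∫ ω, (X 0 ω).1 * (X 0 ω).2 ∂μ with hEq
  -- variance identity
  have hvar : σ1 ^ 2 = Ep - θ1 ^ 2 := by
    rw [hσ1, variance_eq_sub hL2a]
    simp only [Pi.pow_apply]
    rw [← hθ1]
  -- covariance identity
  have hcov : ρ * (σ1 * σ2) = Eq - θ1 * θ2 := by
    rw [hρ]
    have hfun : (fun ω => ((X 0 ω).1 - θ1) * ((X 0 ω).2 - θ2))
        = fun ω => (X 0 ω).1 * (X 0 ω).2 - (θ2 * (X 0 ω).1 + θ1 * (X 0 ω).2 - θ1 * θ2) := by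
      funext ω; ring
    have int1 : Integrable (fun ω => θ2 * (X 0 ω).1 + θ1 * (X 0 ω).2) μ := by
      exact (ha.const_mul θ2).add (hb.const_mul θ1)
    have int2 : Integrable (fun ω => θ2 * (X 0 ω).1 + θ1 * (X 0 ω).2 - θ1 * θ2) μ := by
      exact int1.sub (integrable_const _)
    have int3 : ∫ ω, (θ2 * (X 0 ω).1 + θ1 * (X 0 ω).2 - θ1 * θ2) ∂μ
        = θ2 * θ1 + θ1 * θ2 - θ1 * θ2 := by
      rw [integral_sub int1 (integrable_const _),
        integral_add (by exact ha.const_mul θ2) (by exact hb.const_mul θ1),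
        integral_const_mul, integral_const_mul, integral_const]
      simp only [probReal_univ, one_smul]
      rw [← hθ1, ← hθ2]
    rw [hfun, integral_sub hab int2, int3, ← hEq]
    ring
  -- the limiting constant is negative
  set climit : ℝ := Ep - Eq - (θ1 - θ2) * θ1 with hclimit
  have hneg : climit < 0 := by
    have h1 : σ1 < ρ * σ2 := (div_lt_iff₀ hσ2pos).1 hcond
    have h2 : σ1 ^ 2 < ρ * (σ1 * σ2) := by nlinarith
    have : climit = σ1 ^ 2 - ρ * (σ1 * σ2) := by rw [hvar, hcov]; ring
    rw [this]; linarith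
  -- strong law applications
  have sA := slln_comp μ X hindep hident (fun p => p.1) measurable_fst ha
  have sB := slln_comp μ X hindep hident (fun p => p.2) measurable_snd hb
  have sP := slln_comp μ X hindep hident (fun p => p.1 ^ 2) (measurable_fst.pow_const 2) haa
  have sQ := slln_comp μ X hindep hident (fun p => p.1 * p.2)
    (measurable_fst.mul measurable_snd) hab
  rw [← hθ1] at sA
  rw [← hθ2] at sB
  rw [← hEp] at sP
  rw [← hEq] at sQ
  -- a.e. eventual negativity of the weight
  have hev : ∀ᵐ ω ∂μ, ∀ᶠ n in atTop,
      ω ∈ {ω | lam2opt (fun j ω => (X j ω).1) (fun j ω => (X j ω).2) n ω < 0} := by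
    filter_upwards [sA, sB, sP, sQ] with ω hA hB hP hQ
    have hT : Tendsto (fun n : ℕ =>
        (∑ i ∈ Finset.range n, (X i ω).1 ^ 2) / n
          - (∑ i ∈ Finset.range n, (X i ω).1 * (X i ω).2) / n
          - ((∑ i ∈ Finset.range n, (X i ω).1) / n - (∑ i ∈ Finset.range n, (X i ω).2) / n)
              * ((∑ i ∈ Finset.range n, (X i ω).1) / n))
        atTop (nhds climit) :=
      (hP.sub hQ).sub ((hA.sub hB).mul hA)
    have hTneg := hT.eventually (gt_mem_nhds hneg)
    filter_upwards [hTneg, eventually_ge_atTop 2] with n hTn hn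
    have hS2 : S2e (fun j ω => (X j ω).1) (fun j ω => (X j ω).2) n ω < 0 := by
      rw [S2e_eq _ _ hn ω]
      have h2 : (2 : ℝ) ≤ (n : ℝ) := by exact_mod_cast hn
      have hfac : 0 < (n : ℝ) / ((n : ℝ) - 1) ^ 2 := by
        apply div_pos (by linarith)
        have : ((n : ℝ) - 1) ≠ 0 := by linarith
        positivity
      exact mul_neg_of_pos_of_neg hfac hTn
    exact lam2opt_neg _ _ n ω hS2
  exact meas_tendsto_one hev
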